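/- For all x, y in the ellipsoid E = {x ∈ ℍ : 9(re x)² + |im x|² < 1}, the series k_E(x,y) = Σ_{m=0}^∞ P_m(x)·conj(P_m(y)) converges, and k_E is positive definite on E: for every N, all points x₁, …, x_N ∈ E and all u₁, …, u_N ∈ ℍ, the quaternion Σ_{i,j=1}^N conj(u_i)·k_E(x_i, x_j)·u_j is a nonnegative real number (its three imaginary parts vanish and its real part is ≥ 0). -/

import Mathlib

open Quaternion

noncomputable section

/-- The coefficients `T^m_j = 2(m-j+1)/((m+1)(m+2))`. -/
def appellT (m j : ℕ) : ℝ :=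
  (2 * ((m : ℝ) - (j : ℝ) + 1)) / (((m : ℝ) + 1) * ((m : ℝ) + 2))

/-- The `m`-th quaternionic Appell polynomial
`Q_m(x) = Σ_{j=0}^m T^m_j x^{m-j} x̄^j`. -/
def appellQ (m : ℕ) (x : ℍ[ℝ]) : ℍ[ℝ] :=
  ∑ j ∈ Finset.range (m + 1), appellT m j • (x ^ (m - j) * (star x) ^ j)

/-- The normalizing constants `c_m = Σ_{j=0}^m (-1)^j T^m_j`. -/
def appellc (m : ℕ) : ℝ := ∑ j ∈ Finset.range (m + 1), (-1 : ℝ) ^ j * appellT m j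

/-- The polynomials `P_m = Q_m / c_m`. -/
def appellP (m : ℕ) (x : ℍ[ℝ]) : ℍ[ℝ] := (appellc m)⁻¹ • appellQ m x

/-- The ellipsoid `E = {x ∈ ℍ : 9(re x)² + |im x|² < 1}`. -/
def ellE : Set ℍ[ℝ] := {x : ℍ[ℝ] | 9 * x.re ^ 2 + ‖x.im‖ ^ 2 < 1}


section Aux

lemma gauss_sum_real (n : ℕ) : ∑ j ∈ Finset.range n, (j:ℝ) = n * (n - 1) / 2 := by
  induction n with
  | zero => norm_num
  | succ k ih => rw [Finset.sum_range_succ, ih]; push_cast; ring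

lemma appellT_nonneg {m j : ℕ} (h : j ≤ m) : 0 ≤ appellT m j := by
  unfold appellT
  apply div_nonneg
  · have : (j:ℝ) ≤ m := by exact_mod_cast h
    linarith
  · positivity

lemma sum_appellT (m : ℕ) : ∑ j ∈ Finset.range (m + 1), appellT m j = 1 := by
  unfold appellT
  rw [← Finset.sum_div, div_eq_one_iff_eq (by positivity)]
  have h1 : ∑ j ∈ Finset.range (m+1), (2*((m:ℝ) - j + 1))
      = ∑ j ∈ Finset.range (m+1), ((2*(m:ℝ)+2) - 2*(j:ℝ)) := by
    apply Finset.sum_congr rfl; intro j _; ring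
  rw [h1, Finset.sum_sub_distrib, Finset.sum_const, ← Finset.mul_sum, gauss_sum_real]
  simp
  ring

lemma alt_sum (m : ℕ) : ∑ j ∈ Finset.range (m + 1), (-1:ℝ)^j * ((m:ℝ) - j + 1)
    = (2*(m:ℝ) + 3 + (-1:ℝ)^m)/4 := by
  induction m with
  | zero => norm_num
  | succ n ih =>
    have h1 : ∑ j ∈ Finset.range (n + 2), (-1:ℝ)^j * (((n:ℝ)+1) - j + 1)
        = ∑ j ∈ Finset.range (n + 2), ((-1:ℝ)^j * ((n:ℝ) - j + 1) + (-1:ℝ)^j) := by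
      apply Finset.sum_congr rfl; intro j _; ring
    push_cast
    rw [h1, Finset.sum_add_distrib,
      Finset.sum_range_succ (fun j => (-1:ℝ)^j * ((n:ℝ) - j + 1)) (n+1), ih,
      geom_sum_eq (by norm_num)]
    push_cast
    simp only [pow_succ]
    ring

lemma appellc_ge (m : ℕ) : 1/((m:ℝ)+2) ≤ appellc m := by
  unfold appellc appellT
  have h1 : ∑ j ∈ Finset.range (m+1), (-1:ℝ)^j *
      ((2 * ((m : ℝ) - (j : ℝ) + 1)) / (((m : ℝ) + 1) * ((m : ℝ) + 2)))
      = (∑ j ∈ Finset.range (m+1), (-1:ℝ)^j * ((m:ℝ) - j + 1))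
        * (2 / (((m : ℝ) + 1) * ((m : ℝ) + 2))) := by
    rw [Finset.sum_mul]
    apply Finset.sum_congr rfl; intro j _; ring
  rw [h1, alt_sum]
  have hm : (-1:ℝ) ≤ (-1:ℝ)^m := by
    rcases Nat.even_or_odd m with h | h
    · rw [h.neg_one_pow]; norm_num
    · rw [h.neg_one_pow]
  rw [div_mul_div_comm, div_le_div_iff₀ (by positivity) (by positivity)]
  nlinarith [Nat.cast_nonneg (α := ℝ) m]

lemma appellc_pos (m : ℕ) : 0 < appellc m :=
  lt_of_lt_of_le (by positivity) (appellc_ge m)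

lemma norm_appellQ_le (m : ℕ) (x : ℍ[ℝ]) : ‖appellQ m x‖ ≤ ‖x‖ ^ m := by
  unfold appellQ
  calc ‖∑ j ∈ Finset.range (m + 1), appellT m j • (x ^ (m - j) * (star x) ^ j)‖
      ≤ ∑ j ∈ Finset.range (m + 1), ‖appellT m j • (x ^ (m - j) * (star x) ^ j)‖ :=
        norm_sum_le _ _
    _ = ∑ j ∈ Finset.range (m + 1), appellT m j * ‖x‖ ^ m := by
        apply Finset.sum_congr rfl; intro j hj
        have hj' : j ≤ m := Nat.lt_succ_iff.mp (Finset.mem_range.mp hj)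
        rw [norm_smul, Real.norm_eq_abs, abs_of_nonneg (appellT_nonneg hj'),
          norm_mul, norm_pow, norm_pow, norm_star, ← pow_add, Nat.sub_add_cancel hj']
    _ = ‖x‖ ^ m := by rw [← Finset.sum_mul, sum_appellT, one_mul]

lemma norm_appellP_le (m : ℕ) (x : ℍ[ℝ]) : ‖appellP m x‖ ≤ ((m:ℝ) + 2) * ‖x‖ ^ m := by
  unfold appellP
  rw [norm_smul, Real.norm_eq_abs, abs_of_nonneg (inv_nonneg.mpr (appellc_pos m).le)]
  have h1 : (appellc m)⁻¹ ≤ (m:ℝ) + 2 := by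
    rw [inv_le_comm₀ (appellc_pos m) (by positivity), ← one_div]
    exact appellc_ge m
  exact mul_le_mul h1 (norm_appellQ_le m x) (norm_nonneg _) (by positivity)

lemma norm_lt_one_of_mem_ellE {x : ℍ[ℝ]} (hx : x ∈ ellE) : ‖x‖ < 1 := by
  have h2 : ‖x‖^2 < 1 := by
    rw [sq, ← normSq_eq_norm_mul_self, normSq_def']
    have him : ‖x.im‖^2 = x.imI^2 + x.imJ^2 + x.imK^2 := by
      rw [sq, ← normSq_eq_norm_mul_self]; simp [normSq_def', sq]
    have hx' := hx
    simp only [ellE, Set.mem_setOf_eq, him] at hx'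
    nlinarith [sq_nonneg x.re]
  nlinarith [norm_nonneg x]

def imIclm : ℍ[ℝ] →L[ℝ] ℝ :=
  ⟨⟨⟨fun q => q.imI, fun a b => by simp⟩, fun r a => by simp⟩, Quaternion.continuous_imI⟩
def imJclm : ℍ[ℝ] →L[ℝ] ℝ :=
  ⟨⟨⟨fun q => q.imJ, fun a b => by simp⟩, fun r a => by simp⟩, Quaternion.continuous_imJ⟩
def imKclm : ℍ[ℝ] →L[ℝ] ℝ :=
  ⟨⟨⟨fun q => q.imK, fun a b => by simp⟩, fun r a => by simp⟩, Quaternion.continuous_imK⟩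
def reclm : ℍ[ℝ] →L[ℝ] ℝ :=
  ⟨⟨⟨fun q => q.re, fun a b => by simp⟩, fun r a => by simp⟩, Quaternion.continuous_re⟩

lemma summable_poly_geom {r : ℝ} (h0 : 0 ≤ r) (h1 : r < 1) :
    Summable fun m : ℕ => ((m:ℝ)+2)^2 * r^m := by
  have hr : ‖r‖ < 1 := by rwa [Real.norm_eq_abs, abs_of_nonneg h0]
  have h2 := summable_pow_mul_geometric_of_norm_lt_one 2 hr
  have h1' := summable_pow_mul_geometric_of_norm_lt_one 1 hr
  have h0' := summable_geometric_of_norm_lt_one hr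
  apply (h2.add ((h1'.mul_left 4).add (h0'.mul_left 4))).congr
  intro m; ring

lemma summable_kernel {x y : ℍ[ℝ]} (hx : x ∈ ellE) (hy : y ∈ ellE) :
    Summable fun m => appellP m x * star (appellP m y) := by
  have hx1 := norm_lt_one_of_mem_ellE hx
  have hy1 := norm_lt_one_of_mem_ellE hy
  have hr0 : 0 ≤ ‖x‖ * ‖y‖ := mul_nonneg (norm_nonneg _) (norm_nonneg _)
  have hr1 : ‖x‖ * ‖y‖ < 1 := by nlinarith [norm_nonneg x, norm_nonneg y]
  apply Summable.of_norm_bounded (summable_poly_geom hr0 hr1)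
  intro m
  rw [norm_mul, norm_star]
  calc ‖appellP m x‖ * ‖appellP m y‖
      ≤ (((m:ℝ)+2) * ‖x‖^m) * (((m:ℝ)+2) * ‖y‖^m) :=
        mul_le_mul (norm_appellP_le m x) (norm_appellP_le m y) (norm_nonneg _)
          (by positivity)
    _ = ((m:ℝ)+2)^2 * (‖x‖*‖y‖)^m := by rw [mul_pow]; ring

end Aux

/-- The Hardy kernel `k_E(x,y) = Σ_m P_m(x) conj(P_m(y))` converges on `E × E` and
is positive definite on `E`: every quadratic form
`Σ_{i,j} conj(u_i) k_E(x_i, x_j) u_j` is a nonnegative real quaternion. -/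
theorem hardy_kernel_converges_and_posdef :
    (∀ x ∈ ellE, ∀ y ∈ ellE, Summable fun m => appellP m x * star (appellP m y)) ∧
    (∀ (N : ℕ) (x : Fin N → ℍ[ℝ]), (∀ i, x i ∈ ellE) → ∀ u : Fin N → ℍ[ℝ],
      (∑ i, ∑ j, star (u i) *
          (∑' m, appellP m (x i) * star (appellP m (x j))) * u j).imI = 0 ∧
      (∑ i, ∑ j, star (u i) *
          (∑' m, appellP m (x i) * star (appellP m (x j))) * u j).imJ = 0 ∧
      (∑ i, ∑ j, star (u i) *
          (∑' m, appellP m (x i) * star (appellP m (x j))) * u j).imK = 0 ∧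
      0 ≤ (∑ i, ∑ j, star (u i) *
          (∑' m, appellP m (x i) * star (appellP m (x j))) * u j).re) := by
  constructor
  · intro x hx y hy
    exact summable_kernel hx hy
  · intro N x hx u
    set A : ℕ → Fin N → Fin N → ℍ[ℝ] :=
      fun m i j => appellP m (x i) * star (appellP m (x j)) with hA_def
    have hA : ∀ i j, Summable fun m => A m i j := fun i j => summable_kernel (hx i) (hx j)
    have hs : ∀ i j, Summable fun m => star (u i) * A m i j * u j :=
      fun i j => ((hA i j).mul_left _).mul_right _
    set w : ℕ → ℍ[ℝ] := fun m => ∑ i, star (u i) * appellP m (x i) with hw_def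
    have hpt : ∀ m, (∑ i, ∑ j, star (u i) * A m i j * u j) = ((normSq (w m) : ℝ) : ℍ[ℝ]) := by
      intro m
      rw [← self_mul_star, hw_def]
      simp only
      rw [star_sum, Finset.sum_mul_sum]
      apply Finset.sum_congr rfl; intro i _
      apply Finset.sum_congr rfl; intro j _
      simp only [hA_def, star_mul, star_star, mul_assoc]
    have hgsum : Summable fun m => ∑ i, ∑ j, star (u i) * A m i j * u j :=
      summable_sum fun i _ => summable_sum fun j _ => hs i j
    have hg : Summable fun m => ((normSq (w m) : ℝ) : ℍ[ℝ]) :=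
      hgsum.congr hpt
    have key : (∑ i, ∑ j, star (u i) * (∑' m, A m i j) * u j)
        = ∑' m, ((normSq (w m) : ℝ) : ℍ[ℝ]) := by
      have e1 : (∑ i, ∑ j, star (u i) * (∑' m, A m i j) * u j)
          = ∑ i, ∑ j, ∑' m, star (u i) * A m i j * u j := by
        apply Finset.sum_congr rfl; intro i _
        apply Finset.sum_congr rfl; intro j _
        rw [← tsum_mul_left, ← tsum_mul_right]
      rw [e1]
      have e2 : ∀ i ∈ Finset.univ, (∑ j, ∑' m, star (u i) * A m i j * u j)
          = ∑' m, ∑ j, star (u i) * A m i j * u j :=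
        fun i _ => (Summable.tsum_finsetSum fun j _ => hs i j).symm
      rw [Finset.sum_congr rfl e2,
        ← Summable.tsum_finsetSum fun i _ => summable_sum fun j _ => hs i j]
      exact tsum_congr hpt
    rw [key]
    refine ⟨?_, ?_, ?_, ?_⟩
    · calc (∑' m, ((normSq (w m) : ℝ) : ℍ[ℝ])).imI
          = ∑' m, imIclm ((normSq (w m) : ℝ) : ℍ[ℝ]) := imIclm.map_tsum hg
        _ = ∑' m, (0:ℝ) := tsum_congr fun m => by
              show ((normSq (w m) : ℝ) : ℍ[ℝ]).imI = 0; simp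
        _ = 0 := tsum_zero
    · calc (∑' m, ((normSq (w m) : ℝ) : ℍ[ℝ])).imJ
          = ∑' m, imJclm ((normSq (w m) : ℝ) : ℍ[ℝ]) := imJclm.map_tsum hg
        _ = ∑' m, (0:ℝ) := tsum_congr fun m => by
              show ((normSq (w m) : ℝ) : ℍ[ℝ]).imJ = 0; simp
        _ = 0 := tsum_zero
    · calc (∑' m, ((normSq (w m) : ℝ) : ℍ[ℝ])).imK
          = ∑' m, imKclm ((normSq (w m) : ℝ) : ℍ[ℝ]) := imKclm.map_tsum hg
        _ = ∑' m, (0:ℝ) := tsum_congr fun m => by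
              show ((normSq (w m) : ℝ) : ℍ[ℝ]).imK = 0; simp
        _ = 0 := tsum_zero
    · have hre : (∑' m, ((normSq (w m) : ℝ) : ℍ[ℝ])).re
          = ∑' m, reclm ((normSq (w m) : ℝ) : ℍ[ℝ]) := reclm.map_tsum hg
      rw [hre, tsum_congr (fun m => show reclm ((normSq (w m) : ℝ) : ℍ[ℝ]) = normSq (w m) by
        show ((normSq (w m) : ℝ) : ℍ[ℝ]).re = _; simp)]
      exact tsum_nonneg fun m => normSq_nonneg
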